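/- Constants play a generic role in eqLJω without equality: if a, b : i are distinct constants of primitive type i and P is a formula (not containing the equality connective), then P is provable if and only if ∀x∀y. P[x/a, y/b] is provable. Moreover, this interchangeability fails in the presence of equality: the formula a = b → ⊥ is provable, but the formula obtained by replacing both a and b by a single constant c, namely c = c → ⊥, is not provable. -/

import Mathlib

/-- First-order terms: de Bruijn variables (eigenvariables) and
    application of a function symbol (a `Nat` code) to arguments. -/
inductive Tm : Type where
  | var : Nat → Tm
  | app : Nat → List Tm → Tm

namespace Tm

/-- Substitution for variables. -/
def subst (σ : Nat → Tm) : Tm → Tm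
  | var n => σ n
  | app f ts => app f (ts.attach.map (fun t => subst σ t.1))
  decreasing_by have := List.sizeOf_lt_of_mem t.2; simp_wf; omega

/-- All free variables are `< k`. -/
inductive Bv : Nat → Tm → Prop where
  | var : ∀ {k n}, n < k → Bv k (var n)
  | app : ∀ {k f ts}, (∀ t ∈ ts, Bv k t) → Bv k (app f ts)

end Tm

/-- `σ` is a unifier of `s` and `t`. -/
def Unifies (σ : Nat → Tm) (s t : Tm) : Prop := s.subst σ = t.subst σ

/-- `U` is a complete set of unifiers of `s` and `t`. -/
def IsCSU (U : Set (Nat → Tm)) (s t : Tm) : Prop :=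
  (∀ σ ∈ U, Unifies σ s t) ∧
  ∀ θ, Unifies θ s t → ∃ σ ∈ U, ∃ δ, ∀ n, (σ n).subst δ = θ n

/-- Formulas of eqLJω (first-order fragment), with de Bruijn binders. -/
inductive Fm : Type where
  | top | bot
  | atom : Nat → List Tm → Fm
  | eq : Tm → Tm → Fm
  | and : Fm → Fm → Fm
  | imp : Fm → Fm → Fm
  | all : Fm → Fm
  | ex : Fm → Fm

namespace Fm

/-- Lift a substitution under a binder. -/
def up (σ : Nat → Tm) : Nat → Tm
  | 0 => .var 0
  | n + 1 => (σ n).subst (fun k => .var (k + 1))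

/-- Apply a substitution to a formula. -/
def substF (σ : Nat → Tm) : Fm → Fm
  | top => top
  | bot => bot
  | atom p ts => atom p (ts.map (Tm.subst σ))
  | eq s t => eq (s.subst σ) (t.subst σ)
  | and A B => and (A.substF σ) (B.substF σ)
  | imp A B => imp (A.substF σ) (B.substF σ)
  | all A => all (A.substF (up σ))
  | ex A => ex (A.substF (up σ))

/-- Shift all free variables up by one. -/
def shift (A : Fm) : Fm := A.substF (fun n => .var (n + 1))

/-- Instantiate de Bruijn variable 0 with `t`. -/
def subst0 (t : Tm) (A : Fm) : Fm :=
  A.substF (fun n => match n with | 0 => t | n + 1 => .var n)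

/-- All free variables are `< k`. -/
inductive Bv : Nat → Fm → Prop where
  | top : Bv k top
  | bot : Bv k bot
  | atom : (∀ t ∈ ts, Tm.Bv k t) → Bv k (atom p ts)
  | eq : Tm.Bv k s → Tm.Bv k t → Bv k (eq s t)
  | and : Bv k A → Bv k B → Bv k (and A B)
  | imp : Bv k A → Bv k B → Bv k (imp A B)
  | all : Bv (k + 1) A → Bv k (all A)
  | ex : Bv (k + 1) A → Bv k (ex A)

end Fm

/-- The sequent calculus eqLJω: intuitionistic LJ together with the
    rules `=R` (reflexivity on the right) and `=L` (case analysis over a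
    complete set of unifiers on the left). -/
inductive Prv : List Fm → Fm → Prop where
  | init : Fm.atom p ts ∈ Γ → Prv Γ (.atom p ts)
  | topR : Prv Γ .top
  | botL : Fm.bot ∈ Γ → Prv Γ C
  | andR : Prv Γ A → Prv Γ B → Prv Γ (.and A B)
  | andL : Fm.and A B ∈ Γ → Prv (A :: B :: Γ) C → Prv Γ C
  | impR : Prv (A :: Γ) B → Prv Γ (.imp A B)
  | impL : Fm.imp A B ∈ Γ → Prv Γ A → Prv (B :: Γ) C → Prv Γ C
  | allR : Prv (Γ.map Fm.shift) A → Prv Γ (.all A)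
  | allL : Fm.all A ∈ Γ → Prv (A.subst0 t :: Γ) C → Prv Γ C
  | exR : Prv Γ (A.subst0 t) → Prv Γ (.ex A)
  | exL : Fm.ex A ∈ Γ → Prv (A :: Γ.map Fm.shift) C.shift → Prv Γ C
  | eqR : Prv Γ (.eq t t)
  | eqL : Fm.eq s t ∈ Γ → IsCSU U s t →
      (∀ σ ∈ U, Prv (Γ.map (Fm.substF σ)) (C.substF σ)) → Prv Γ C

/-- Replace the 0-ary constants `a` and `b` in a term by the de Bruijn
    variables `k+1` and `k` respectively (`k` = number of enclosing binders). -/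
def Tm.replC (a b : Nat) (k : Nat) : Tm → Tm
  | .var n => .var n
  | .app f ts =>
    match ts with
    | [] => if f = a then .var (k + 1) else if f = b then .var k else .app f []
    | t :: ts' =>
      .app f (((t :: ts') : List Tm).attach.map (fun s => Tm.replC a b k s.1))
  decreasing_by have := List.sizeOf_lt_of_mem s.2; simp at this ⊢; omega

/-- Replace the constants `a`, `b` in a formula by the de Bruijn variables
    bound by two universal quantifiers placed outside the (closed) formula. -/
def Fm.replC (a b : Nat) (k : Nat) : Fm → Fm
  | .top => .top
  | .bot => .bot
  | .atom p ts => .atom p (ts.map (Tm.replC a b k))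
  | .eq s t => .eq (s.replC a b k) (t.replC a b k)
  | .and A B => .and (A.replC a b k) (B.replC a b k)
  | .imp A B => .imp (A.replC a b k) (B.replC a b k)
  | .all A => .all (A.replC a b (k + 1))
  | .ex A => .ex (A.replC a b (k + 1))

/-- The formula does not contain the equality connective. -/
def Fm.EqFree : Fm → Prop
  | .top => True
  | .bot => True
  | .atom _ _ => True
  | .eq _ _ => False
  | .and A B => A.EqFree ∧ B.EqFree
  | .imp A B => A.EqFree ∧ B.EqFree
  | .all A => A.EqFree
  | .ex A => A.EqFree

theorem Tm.ind' {motive : Tm → Prop} (hv : ∀ n, motive (.var n))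
    (ha : ∀ f ts, (∀ t ∈ ts, motive t) → motive (.app f ts)) : ∀ t, motive t
  | .var n => hv n
  | .app f ts => ha f ts (fun t ht => Tm.ind' hv ha t)
  decreasing_by have := List.sizeOf_lt_of_mem ht; simp; omega

theorem Tm.subst_var' (σ : Nat → Tm) (n : Nat) : (Tm.var n).subst σ = σ n := by
  simp [Tm.subst]

theorem Tm.subst_app (σ : Nat → Tm) (f : Nat) (ts : List Tm) :
    (Tm.app f ts).subst σ = .app f (ts.map (Tm.subst σ)) := by
  rw [Tm.subst]
  simp [List.map_attach_eq_pmap]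
theorem Tm.replC_var (a b k n : Nat) : (Tm.var n).replC a b k = .var n := by
  simp [Tm.replC]

theorem Tm.replC_a (a b k : Nat) : (Tm.app a []).replC a b k = .var (k+1) := by
  simp [Tm.replC]

theorem Tm.replC_b (a b k : Nat) (hab : a ≠ b) :
    (Tm.app b []).replC a b k = .var k := by
  simp [Tm.replC, (Ne.symm hab)]

theorem Tm.replC_app_ne {a b : Nat} (k f : Nat) (ts : List Tm) (hfa : f ≠ a) (hfb : f ≠ b) :
    (Tm.app f ts).replC a b k = .app f (ts.map (Tm.replC a b k)) := by
  cases ts with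
  | nil => simp [Tm.replC, hfa, hfb]
  | cons t ts => rw [Tm.replC]; simp [List.map_attach_eq_pmap, List.attach, List.attachWith, List.map_pmap, List.pmap_eq_map]

theorem Tm.replC_app_cons {a b : Nat} (k f : Nat) (t : Tm) (ts : List Tm) :
    (Tm.app f (t :: ts)).replC a b k = .app f ((t :: ts).map (Tm.replC a b k)) := by
  rw [Tm.replC]; simp [List.map_attach_eq_pmap, List.attach, List.attachWith, List.map_pmap, List.pmap_eq_map]

theorem Tm.subst_comp (σ δ : Nat → Tm) : ∀ t : Tm,
    (t.subst σ).subst δ = t.subst (fun n => (σ n).subst δ) := by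
  apply Tm.ind'
  · intro n; simp [Tm.subst]
  · intro f ts ih; simp [Tm.subst_app, List.map_map]
    exact fun t ht => ih t ht

theorem Tm.subst_var : ∀ t : Tm, t.subst Tm.var = t := by
  apply Tm.ind'
  · intro n; simp [Tm.subst]
  · intro f ts ih; rw [Tm.subst_app, List.map_congr_left (g := id) ih, List.map_id]
def Ren (j : Nat) : Nat → Tm := fun n => if n < j then .var n else .var (n+1)
def Tad (j : Nat) : Nat → Tm := fun n => .var (n+j)
def Tau (j : Nat) (v : Tm) : Nat → Tm :=
  fun n => if n < j then .var n else if n = j then v.subst (Tad j) else .var (n-1)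
def Zeta (a b k : Nat) : Nat → Tm :=
  fun n => if n < k then .var n else if n = k then .app b [] else
    if n = k+1 then .app a [] else .var (n-2)

theorem Tm.replC_subst_gen {a b : Nat} (hab : a ≠ b) (σ σ' : Nat → Tm) (k1 k2 : Nat)
    (Hvar : ∀ n, (σ n).replC a b k2 = σ' n)
    (Ha : Tm.var (k2+1) = σ' (k1+1)) (Hb : Tm.var k2 = σ' k1) :
    ∀ t : Tm, (t.subst σ).replC a b k2 = (t.replC a b k1).subst σ' := by
  apply Tm.ind'
  · intro n; rw [Tm.subst_var', Tm.replC_var, Tm.subst_var']; exact Hvar n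
  · intro f ts ih
    cases ts with
    | nil =>
      by_cases hfa : f = a
      · subst hfa
        rw [Tm.subst_app, List.map_nil, Tm.replC_a, Tm.replC_a, Tm.subst_var']
        exact Ha
      · by_cases hfb : f = b
        · subst hfb
          rw [Tm.subst_app, List.map_nil, Tm.replC_b _ _ _ hab, Tm.replC_b _ _ _ hab,
            Tm.subst_var']
          exact Hb
        · rw [Tm.subst_app, List.map_nil, Tm.replC_app_ne _ _ _ hfa hfb,
            Tm.replC_app_ne _ _ _ hfa hfb, Tm.subst_app]
          simp
    | cons t ts =>
      simp only [Tm.subst_app, Tm.replC_app_cons, List.map_cons, List.map_map]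
      congr 2
      · exact ih t (by simp)
      · exact List.map_congr_left fun s hs => ih s (by simp [hs])

theorem Tm.replC_zeta {a b : Nat} (hab : a ≠ b) {k : Nat} {t : Tm} (h : Tm.Bv k t) :
    (t.replC a b k).subst (Zeta a b k) = t := by
  induction h with
  | var hn => rw [Tm.replC_var, Tm.subst_var']; simp [Zeta, hn]
  | app hts ih =>
    rename_i f ts
    cases ts with
    | nil =>
      by_cases hfa : f = a
      · subst hfa; rw [Tm.replC_a, Tm.subst_var']; simp [Zeta]
      · by_cases hfb : f = b
        · subst hfb; rw [Tm.replC_b _ _ _ hab, Tm.subst_var']; simp [Zeta]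
        · rw [Tm.replC_app_ne _ _ _ hfa hfb, Tm.subst_app]; simp
    | cons t ts =>
      rw [Tm.replC_app_cons, Tm.subst_app, List.map_map]
      congr 1
      rw [List.map_congr_left (g := id) ?_, List.map_id]
      intro s hs; exact ih s hs
theorem Fm.up_comp (σ δ : Nat → Tm) :
    (fun n => (Fm.up σ n).subst (Fm.up δ)) = Fm.up (fun n => (σ n).subst δ) := by
  funext n
  cases n with
  | zero => simp [Fm.up, Tm.subst_var']
  | succ n =>
    simp only [Fm.up, Tm.subst_comp]
    congr 1
    funext m
    rw [Tm.subst_var']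
    simp [Fm.up]

theorem Fm.substF_comp (σ δ : Nat → Tm) (A : Fm) :
    (A.substF σ).substF δ = A.substF (fun n => (σ n).subst δ) := by
  induction A generalizing σ δ with
  | top => rfl
  | bot => rfl
  | atom p ts => simp [Fm.substF, List.map_map, Function.comp, Tm.subst_comp]
  | eq s t => simp [Fm.substF, Tm.subst_comp]
  | and A B ihA ihB => simp [Fm.substF, ihA, ihB]
  | imp A B ihA ihB => simp [Fm.substF, ihA, ihB]
  | all A ih => simp [Fm.substF, ih, Fm.up_comp]
  | ex A ih => simp [Fm.substF, ih, Fm.up_comp]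

def Cns (u : Tm) (ν : Nat → Tm) : Nat → Tm := fun n => match n with | 0 => u | n+1 => ν n

def Sem : Fm → (Nat → Tm) → Prop
  | .top, _ => True
  | .bot, _ => False
  | .atom _ _, _ => True
  | .eq s t, ν => s.subst ν = t.subst ν
  | .and A B, ν => Sem A ν ∧ Sem B ν
  | .imp A B, ν => Sem A ν → Sem B ν
  | .all A, ν => ∀ u, Sem A (Cns u ν)
  | .ex A, ν => ∃ u, Sem A (Cns u ν)

theorem Cns_up (σ ν : Nat → Tm) (u : Tm) :
    (fun n => Tm.subst (Cns u ν) (Fm.up σ n)) = Cns u (fun n => Tm.subst ν (σ n)) := by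
  funext n
  cases n with
  | zero => simp [Fm.up, Cns, Tm.subst_var']
  | succ n =>
    simp only [Fm.up, Cns, Tm.subst_comp]
    congr 1
    funext m
    rw [Tm.subst_var']
    rfl

theorem Sem_substF (A : Fm) (σ ν : Nat → Tm) :
    Sem (A.substF σ) ν ↔ Sem A (fun n => (σ n).subst ν) := by
  induction A generalizing σ ν with
  | top => simp [Fm.substF, Sem]
  | bot => simp [Fm.substF, Sem]
  | atom p ts => simp [Fm.substF, Sem]
  | eq s t => simp [Fm.substF, Sem, Tm.subst_comp]
  | and A B ihA ihB => simp [Fm.substF, Sem, ihA, ihB]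
  | imp A B ihA ihB => simp [Fm.substF, Sem, ihA, ihB]
  | all A ih => simp only [Fm.substF, Sem, ih, Cns_up]
  | ex A ih => simp only [Fm.substF, Sem, ih, Cns_up]

theorem Sem_shift (A : Fm) (u : Tm) (ν : Nat → Tm) :
    Sem (A.shift) (Cns u ν) ↔ Sem A ν := by
  rw [Fm.shift, Sem_substF]
  apply iff_of_eq
  congr 1
  funext n
  rw [Tm.subst_var']
  rfl

theorem Sem_subst0 (A : Fm) (t : Tm) (ν : Nat → Tm) :
    Sem (A.subst0 t) ν ↔ Sem A (Cns (t.subst ν) ν) := by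
  rw [Fm.subst0, Sem_substF]
  apply iff_of_eq
  congr 1
  funext n
  cases n with
  | zero => rfl
  | succ n => rw [Tm.subst_var']; rfl
theorem Prv.sound {Γ C} (h : Prv Γ C) : ∀ ν, (∀ D ∈ Γ, Sem D ν) → Sem C ν := by
  induction h with
  | init _ => intro ν _; trivial
  | topR => intro ν _; trivial
  | botL hm => intro ν hΓ; exact absurd (hΓ _ hm) (by simp [Sem])
  | andR _ _ ih1 ih2 => exact fun ν hΓ => ⟨ih1 ν hΓ, ih2 ν hΓ⟩
  | andL hm _ ih =>
    intro ν hΓ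
    have hand := hΓ _ hm
    refine ih ν ?_
    intro D hD
    simp only [List.mem_cons] at hD
    rcases hD with rfl | rfl | hD
    · exact hand.1
    · exact hand.2
    · exact hΓ _ hD
  | impR _ ih =>
    intro ν hΓ hA
    refine ih ν ?_
    intro D hD
    simp only [List.mem_cons] at hD
    rcases hD with rfl | hD
    · exact hA
    · exact hΓ _ hD
  | impL hm _ _ ih1 ih2 =>
    intro ν hΓ
    have hB := hΓ _ hm (ih1 ν hΓ)
    refine ih2 ν ?_
    intro D hD
    simp only [List.mem_cons] at hD
    rcases hD with rfl | hD
    · exact hB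
    · exact hΓ _ hD
  | allR _ ih =>
    intro ν hΓ u
    refine ih (Cns u ν) ?_
    intro D hD
    rw [List.mem_map] at hD
    obtain ⟨E, hE, rfl⟩ := hD
    exact (Sem_shift E u ν).2 (hΓ _ hE)
  | allL hm _ ih =>
    intro ν hΓ
    refine ih ν ?_
    intro D hD
    simp only [List.mem_cons] at hD
    rcases hD with rfl | hD
    · rw [Sem_subst0]; exact hΓ _ hm _
    · exact hΓ _ hD
  | exR _ ih =>
    intro ν hΓ
    exact ⟨_, (Sem_subst0 _ _ _).1 (ih ν hΓ)⟩
  | exL hm _ ih =>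
    intro ν hΓ
    obtain ⟨u, hu⟩ := hΓ _ hm
    refine (Sem_shift _ u ν).1 (ih (Cns u ν) ?_)
    intro D hD
    simp only [List.mem_cons] at hD
    rcases hD with rfl | hD
    · exact hu
    · rw [List.mem_map] at hD
      obtain ⟨E, hE, rfl⟩ := hD
      exact (Sem_shift E u ν).2 (hΓ _ hE)
  | eqR => intro ν _; rfl
  | eqL hm hcsu _ ih =>
    intro ν hΓ
    have huni := hΓ _ hm
    obtain ⟨σ, hσU, δ, hδ⟩ := hcsu.2 ν huni
    have hcomp : (fun n => Tm.subst δ (σ n)) = ν := funext hδ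
    have := ih σ hσU δ ?_
    · rw [Sem_substF, hcomp] at this
      exact this
    · intro D hD
      rw [List.mem_map] at hD
      obtain ⟨E, hE, rfl⟩ := hD
      rw [Sem_substF, hcomp]
      exact hΓ _ hE
theorem Fm.shift_substF (σ : Nat → Tm) (D : Fm) :
    (Fm.shift D).substF (Fm.up σ) = Fm.shift (D.substF σ) := by
  unfold Fm.shift
  rw [Fm.substF_comp, Fm.substF_comp]
  congr 1
  funext n
  rw [Tm.subst_var']
  simp [Fm.up]

theorem Fm.subst0_substF (σ : Nat → Tm) (t : Tm) (A : Fm) :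
    (A.subst0 t).substF σ = (A.substF (Fm.up σ)).subst0 (t.subst σ) := by
  unfold Fm.subst0
  rw [Fm.substF_comp, Fm.substF_comp]
  congr 1
  funext n
  cases n with
  | zero => simp [Fm.up, Tm.subst_var']
  | succ n => simp [Fm.up, Tm.subst_var', Tm.subst_comp, Tm.subst_var]

theorem Fm.map_shift_substF (σ : Nat → Tm) (Γ : List Fm) :
    (Γ.map Fm.shift).map (Fm.substF (Fm.up σ)) = (Γ.map (Fm.substF σ)).map Fm.shift := by
  simp only [List.map_map]
  exact List.map_congr_left fun D _ => by simp only [Function.comp]; exact Fm.shift_substF σ D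

theorem Prv.substAdm {Γ C} (h : Prv Γ C) : ∀ σ, Prv (Γ.map (Fm.substF σ)) (C.substF σ) := by
  induction h with
  | init hm =>
    intro σ
    simp only [Fm.substF]
    exact Prv.init (by simpa [Fm.substF] using List.mem_map_of_mem (f := Fm.substF σ) hm)
  | topR => intro σ; exact Prv.topR
  | botL hm =>
    intro σ
    exact Prv.botL (by simpa [Fm.substF] using List.mem_map_of_mem (f := Fm.substF σ) hm)
  | andR _ _ ih1 ih2 => intro σ; exact Prv.andR (ih1 σ) (ih2 σ)
  | andL hm _ ih =>
    intro σ
    exact Prv.andL (by simpa [Fm.substF] using List.mem_map_of_mem (f := Fm.substF σ) hm) (ih σ)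
  | impR _ ih => intro σ; exact Prv.impR (ih σ)
  | impL hm _ _ ih1 ih2 =>
    intro σ
    exact Prv.impL (by simpa [Fm.substF] using List.mem_map_of_mem (f := Fm.substF σ) hm)
      (ih1 σ) (ih2 σ)
  | allR _ ih =>
    intro σ
    apply Prv.allR
    have := ih (Fm.up σ)
    rwa [Fm.map_shift_substF] at this
  | allL hm _ ih =>
    intro σ
    have := ih σ
    simp only [List.map_cons] at this
    rw [Fm.subst0_substF] at this
    exact Prv.allL (by simpa [Fm.substF] using List.mem_map_of_mem (f := Fm.substF σ) hm) this
  | exR _ ih =>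
    intro σ
    have := ih σ
    rw [Fm.subst0_substF] at this
    exact Prv.exR this
  | exL hm _ ih =>
    intro σ
    have := ih (Fm.up σ)
    simp only [List.map_cons] at this
    rw [Fm.map_shift_substF, Fm.shift_substF] at this
    exact Prv.exL (by simpa [Fm.substF] using List.mem_map_of_mem (f := Fm.substF σ) hm) this
  | @eqL Γ s t U C hm hcsu _ ih =>
    intro σ
    refine Prv.eqL (s := s.subst σ) (t := t.subst σ)
      (U := {θ | Unifies θ (s.subst σ) (t.subst σ)}) ?_ ?_ ?_
    · simpa [Fm.substF] using List.mem_map_of_mem (f := Fm.substF σ) hm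
    · exact ⟨fun θ hθ => hθ, fun θ hθ => ⟨θ, hθ, Tm.var, fun n => Tm.subst_var _⟩⟩
    · intro θ hθ
      have huni : Unifies (fun n => (σ n).subst θ) s t := by
        unfold Unifies
        rw [← Tm.subst_comp, ← Tm.subst_comp]
        exact hθ
      obtain ⟨σ₀, hσ₀, δ, hδ⟩ := hcsu.2 _ huni
      have key : (fun n => Tm.subst δ (σ₀ n)) = (fun n => Tm.subst θ (σ n)) :=
        funext fun n => hδ n
      have lem : ∀ E : Fm, (E.substF σ₀).substF δ = (E.substF σ).substF θ := fun E => by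
        rw [Fm.substF_comp, Fm.substF_comp, key]
      have := ih σ₀ hσ₀ δ
      have hctx : (Γ.map (Fm.substF σ₀)).map (Fm.substF δ)
          = (Γ.map (Fm.substF σ)).map (Fm.substF θ) := by
        simp only [List.map_map]
        exact List.map_congr_left fun E _ => by simp only [Function.comp]; exact lem E
      rwa [hctx, lem C] at this
  | eqR => intro σ; exact Prv.eqR
theorem Fm.EqFree_substF (σ : Nat → Tm) (A : Fm) : (A.substF σ).EqFree ↔ A.EqFree := by
  induction A generalizing σ <;> simp_all [Fm.substF, Fm.EqFree]

theorem Tm.replC_ren {a b : Nat} (hab : a ≠ b) {j k : Nat} (hjk : j ≤ k) (t : Tm) :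
    (t.subst (Ren j)).replC a b (k+1) = (t.replC a b k).subst (Ren j) := by
  refine Tm.replC_subst_gen hab _ _ _ _ ?_ ?_ ?_ t
  · intro n; by_cases h : n < j <;> simp [Ren, h, Tm.replC_var]
  · simp only [Ren]; rw [if_neg (by omega)]
  · simp only [Ren]; rw [if_neg (by omega)]

theorem Tm.replC_tad {a b : Nat} (hab : a ≠ b) (j k : Nat) (t : Tm) :
    (t.subst (Tad j)).replC a b (k+j) = (t.replC a b k).subst (Tad j) := by
  refine Tm.replC_subst_gen hab _ _ _ _ ?_ ?_ ?_ t
  · intro n; simp [Tad, Tm.replC_var]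
  · simp only [Tad]; congr 1; omega
  · simp only [Tad]

theorem Tm.replC_tau {a b : Nat} (hab : a ≠ b) (j k : Nat) (v t : Tm) :
    (t.subst (Tau j v)).replC a b (k+j) = (t.replC a b (k+j+1)).subst (Tau j (v.replC a b k)) := by
  refine Tm.replC_subst_gen hab _ _ _ _ ?_ ?_ ?_ t
  · intro n
    rcases lt_trichotomy n j with h | rfl | h
    · simp [Tau, h, Tm.replC_var]
    · have e1 : Tau n v n = v.subst (Tad n) := by simp [Tau]
      have e2 : Tau n (v.replC a b k) n = (v.replC a b k).subst (Tad n) := by simp [Tau]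
      rw [e1, e2]
      exact Tm.replC_tad hab n k v
    · simp [Tau, Nat.lt_asymm h, Nat.not_lt_of_lt h, Ne.symm (Nat.ne_of_lt h), Tm.replC_var]
  · simp only [Tau]; rw [if_neg (by omega), if_neg (by omega)]; congr 1
  · simp only [Tau]; rw [if_neg (by omega), if_neg (by omega)]; congr 1

theorem Fm.replC_substF_gen {a b : Nat} (hab : a ≠ b) (A : Fm) :
    ∀ (σ σ' : Nat → Tm) (k1 k2 : Nat),
    (∀ n, (σ n).replC a b k2 = σ' n) → (Tm.var (k2+1) = σ' (k1+1)) → (Tm.var k2 = σ' k1) →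
    (A.substF σ).replC a b k2 = (A.replC a b k1).substF σ' := by
  have hsh : (fun m => Tm.var (m+1)) = Ren 0 := by funext m; simp [Ren]
  induction A with
  | top => intros; rfl
  | bot => intros; rfl
  | atom p ts =>
    intro σ σ' k1 k2 Hvar Ha Hb
    simp only [Fm.substF, Fm.replC, List.map_map]
    congr 1
    exact List.map_congr_left fun s _ => by
      simp only [Function.comp]
      exact Tm.replC_subst_gen hab σ σ' k1 k2 Hvar Ha Hb s
  | eq s t =>
    intro σ σ' k1 k2 Hvar Ha Hb
    simp only [Fm.substF, Fm.replC]
    rw [Tm.replC_subst_gen hab σ σ' k1 k2 Hvar Ha Hb s,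
      Tm.replC_subst_gen hab σ σ' k1 k2 Hvar Ha Hb t]
  | and A B ihA ihB =>
    intro σ σ' k1 k2 Hvar Ha Hb
    simp only [Fm.substF, Fm.replC]
    rw [ihA σ σ' k1 k2 Hvar Ha Hb, ihB σ σ' k1 k2 Hvar Ha Hb]
  | imp A B ihA ihB =>
    intro σ σ' k1 k2 Hvar Ha Hb
    simp only [Fm.substF, Fm.replC]
    rw [ihA σ σ' k1 k2 Hvar Ha Hb, ihB σ σ' k1 k2 Hvar Ha Hb]
  | all A ih =>
    intro σ σ' k1 k2 Hvar Ha Hb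
    simp only [Fm.substF, Fm.replC]
    rw [ih (Fm.up σ) (Fm.up σ') (k1+1) (k2+1) ?_ ?_ ?_]
    · intro n
      cases n with
      | zero => simp [Fm.up, Tm.replC_var]
      | succ n =>
        simp only [Fm.up, hsh]
        rw [Tm.replC_ren hab (Nat.zero_le k2), Hvar n]
    · show Tm.var (k2+2) = (σ' (k1+1)).subst (fun m => Tm.var (m+1))
      rw [← Ha, Tm.subst_var']
    · show Tm.var (k2+1) = (σ' k1).subst (fun m => Tm.var (m+1))
      rw [← Hb, Tm.subst_var']
  | ex A ih =>
    intro σ σ' k1 k2 Hvar Ha Hb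
    simp only [Fm.substF, Fm.replC]
    rw [ih (Fm.up σ) (Fm.up σ') (k1+1) (k2+1) ?_ ?_ ?_]
    · intro n
      cases n with
      | zero => simp [Fm.up, Tm.replC_var]
      | succ n =>
        simp only [Fm.up, hsh]
        rw [Tm.replC_ren hab (Nat.zero_le k2), Hvar n]
    · show Tm.var (k2+2) = (σ' (k1+1)).subst (fun m => Tm.var (m+1))
      rw [← Ha, Tm.subst_var']
    · show Tm.var (k2+1) = (σ' k1).subst (fun m => Tm.var (m+1))
      rw [← Hb, Tm.subst_var']

theorem Fm.replC_shift {a b : Nat} (hab : a ≠ b) (k : Nat) (D : Fm) :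
    (Fm.shift D).replC a b (k+1) = Fm.shift (D.replC a b k) := by
  have hsh : (fun m => Tm.var (m+1)) = Ren 0 := by funext m; simp [Ren]
  unfold Fm.shift
  rw [hsh]
  refine Fm.replC_substF_gen hab D (Ren 0) (Ren 0) k (k+1) ?_ ?_ ?_
  · intro n; simp [Ren, Tm.replC_var]
  · simp [Ren]
  · simp [Ren]

theorem Fm.replC_subst0 {a b : Nat} (hab : a ≠ b) (k : Nat) (t : Tm) (A : Fm) :
    (A.subst0 t).replC a b k = (A.replC a b (k+1)).subst0 (t.replC a b k) := by
  have h0 : ∀ v : Tm, (fun n => match n with | 0 => v | n+1 => Tm.var n) = Tau 0 v := by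
    intro v
    funext n
    cases n with
    | zero =>
      have hT : Tad 0 = Tm.var := by funext m; simp [Tad]
      simp [Tau, hT, Tm.subst_var]
    | succ n => simp [Tau]
  unfold Fm.subst0
  rw [h0 t, h0 (t.replC a b k)]
  refine Fm.replC_substF_gen hab A (Tau 0 t) (Tau 0 (t.replC a b k)) (k+1) k ?_ ?_ ?_
  · intro n
    cases n with
    | zero =>
      simp only [Tau, if_neg (lt_irrefl 0), if_pos rfl]
      exact Tm.replC_tad hab 0 k t
    | succ n => simp [Tau, Tm.replC_var]
  · simp [Tau]
  · simp [Tau]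

theorem Zeta_lt {a b k n : Nat} (h : n < k) : Zeta a b k n = .var n := by
  simp only [Zeta]; rw [if_pos h]

theorem Zeta_k (a b k : Nat) : Zeta a b k k = .app b [] := by
  simp only [Zeta]; rw [if_neg (by omega)]; simp

theorem Zeta_k1 (a b k : Nat) : Zeta a b k (k+1) = .app a [] := by
  simp only [Zeta]; rw [if_neg (by omega), if_neg (by omega)]; simp

theorem Zeta_ge {a b k n : Nat} (h : k+2 ≤ n) : Zeta a b k n = .var (n-2) := by
  simp only [Zeta]; rw [if_neg (by omega), if_neg (by omega), if_neg (by omega)]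

theorem Fm.up_zeta (a b k : Nat) : Fm.up (Zeta a b k) = Zeta a b (k+1) := by
  funext n
  cases n with
  | zero => rw [Zeta_lt (by omega)]; rfl
  | succ n =>
    show (Zeta a b k n).subst (fun m => Tm.var (m+1)) = Zeta a b (k+1) (n+1)
    rcases lt_trichotomy n k with h | rfl | h
    · rw [Zeta_lt h, Zeta_lt (by omega), Tm.subst_var']
    · rw [Zeta_k, Zeta_k, Tm.subst_app, List.map_nil]
    · rcases Nat.lt_or_ge n (k+2) with h2 | h2
      · have hn : n = k+1 := by omega
        subst hn
        rw [Zeta_k1, Zeta_k1, Tm.subst_app, List.map_nil]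
      · rw [Zeta_ge h2, Zeta_ge (by omega : k+1+2 ≤ n+1), Tm.subst_var']
        congr 1
        omega

theorem Fm.replC_zeta {a b : Nat} (hab : a ≠ b) {k : Nat} {A : Fm} (h : Fm.Bv k A) :
    (A.replC a b k).substF (Zeta a b k) = A := by
  induction h with
  | top => rfl
  | bot => rfl
  | atom hts =>
    simp only [Fm.replC, Fm.substF, List.map_map]
    congr 1
    rw [List.map_congr_left (g := id) ?_, List.map_id]
    intro s hs
    simp only [Function.comp, id]
    exact Tm.replC_zeta hab (hts s hs)
  | eq hs ht =>
    simp only [Fm.replC, Fm.substF]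
    rw [Tm.replC_zeta hab hs, Tm.replC_zeta hab ht]
  | and _ _ ihA ihB => simp only [Fm.replC, Fm.substF]; rw [ihA, ihB]
  | imp _ _ ihA ihB => simp only [Fm.replC, Fm.substF]; rw [ihA, ihB]
  | all _ ih => simp only [Fm.replC, Fm.substF]; rw [Fm.up_zeta, ih]
  | ex _ ih => simp only [Fm.replC, Fm.substF]; rw [Fm.up_zeta, ih]

theorem Fm.map_shift_replC {a b : Nat} (hab : a ≠ b) (k : Nat) (Γ : List Fm) :
    (Γ.map Fm.shift).map (Fm.replC a b (k+1)) = (Γ.map (Fm.replC a b k)).map Fm.shift := by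
  simp only [List.map_map]
  exact List.map_congr_left fun D _ => by simp only [Function.comp]; exact Fm.replC_shift hab k D

theorem Prv.replCAdm {a b : Nat} (hab : a ≠ b) {Γ C} (h : Prv Γ C) :
    ∀ k, C.EqFree → (∀ D ∈ Γ, D.EqFree) → Prv (Γ.map (Fm.replC a b k)) (C.replC a b k) := by
  induction h with
  | init hm =>
    intro k _ _
    exact Prv.init (by simpa [Fm.replC] using List.mem_map_of_mem (f := Fm.replC a b k) hm)
  | topR => intro k _ _; exact Prv.topR
  | botL hm =>
    intro k _ _
    exact Prv.botL (by simpa [Fm.replC] using List.mem_map_of_mem (f := Fm.replC a b k) hm)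
  | andR _ _ ih1 ih2 =>
    intro k hC hΓ
    exact Prv.andR (ih1 k hC.1 hΓ) (ih2 k hC.2 hΓ)
  | andL hm _ ih =>
    intro k hC hΓ
    have hf := hΓ _ hm
    refine Prv.andL (by simpa [Fm.replC] using List.mem_map_of_mem (f := Fm.replC a b k) hm)
      (ih k hC ?_)
    intro D hD
    simp only [List.mem_cons] at hD
    rcases hD with rfl | rfl | hD
    · exact hf.1
    · exact hf.2
    · exact hΓ _ hD
  | impR _ ih =>
    intro k hC hΓ
    refine Prv.impR (ih k hC.2 ?_)
    intro D hD
    simp only [List.mem_cons] at hD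
    rcases hD with rfl | hD
    · exact hC.1
    · exact hΓ _ hD
  | impL hm _ _ ih1 ih2 =>
    intro k hC hΓ
    have hf := hΓ _ hm
    refine Prv.impL (by simpa [Fm.replC] using List.mem_map_of_mem (f := Fm.replC a b k) hm)
      (ih1 k hf.1 hΓ) (ih2 k hC ?_)
    intro D hD
    simp only [List.mem_cons] at hD
    rcases hD with rfl | hD
    · exact hf.2
    · exact hΓ _ hD
  | allR _ ih =>
    intro k hC hΓ
    apply Prv.allR
    have := ih (k+1) hC ?_
    · rwa [Fm.map_shift_replC hab] at this
    · intro D hD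
      rw [List.mem_map] at hD
      obtain ⟨E, hE, rfl⟩ := hD
      exact (Fm.EqFree_substF _ E).mpr (hΓ _ hE)
  | allL hm _ ih =>
    intro k hC hΓ
    have hf := hΓ _ hm
    have := ih k hC ?_
    · simp only [List.map_cons] at this
      rw [Fm.replC_subst0 hab] at this
      exact Prv.allL (by simpa [Fm.replC] using List.mem_map_of_mem (f := Fm.replC a b k) hm) this
    · intro D hD
      simp only [List.mem_cons] at hD
      rcases hD with rfl | hD
      · exact (Fm.EqFree_substF _ _).mpr hf
      · exact hΓ _ hD
  | exR _ ih =>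
    intro k hC hΓ
    have := ih k ((Fm.EqFree_substF _ _).mpr hC) hΓ
    rw [Fm.replC_subst0 hab] at this
    exact Prv.exR this
  | exL hm _ ih =>
    intro k hC hΓ
    have hf := hΓ _ hm
    have := ih (k+1) ((Fm.EqFree_substF _ _).mpr hC) ?_
    · simp only [List.map_cons] at this
      rw [Fm.map_shift_replC hab, Fm.replC_shift hab] at this
      exact Prv.exL (by simpa [Fm.replC] using List.mem_map_of_mem (f := Fm.replC a b k) hm) this
    · intro D hD
      simp only [List.mem_cons] at hD
      rcases hD with rfl | hD
      · exact hf
      · rw [List.mem_map] at hD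
        obtain ⟨E, hE, rfl⟩ := hD
        exact (Fm.EqFree_substF _ E).mpr (hΓ _ hE)
  | eqR => intro k hC hΓ; simp [Fm.EqFree] at hC
  | eqL hm _ _ _ =>
    intro k hC hΓ
    have := hΓ _ hm
    simp [Fm.EqFree] at this

theorem Prv.all_inv {A : Fm} (h : Prv [] (.all A)) : Prv [] A := by
  cases h with
  | botL hm => simp at hm
  | andL hm _ => simp at hm
  | impL hm _ _ => simp at hm
  | allR hp => simpa using hp
  | allL hm _ => simp at hm
  | exL hm _ => simp at hm
  | eqL hm _ _ => simp at hm


/-- without equality, constants play a generic role: a closed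
    equality-free formula `P` is provable iff `∀x∀y. P[x/a, y/b]` is provable.
    With equality this fails: `a = b → ⊥` is provable (for distinct constants
    `a`, `b`), but `c = c → ⊥` is not. -/
theorem constants_generic_without_equality (a b c : Nat) (hab : a ≠ b) :
    (∀ P : Fm, P.EqFree → Fm.Bv 0 P →
      (Prv [] P ↔ Prv [] (.all (.all (P.replC a b 0))))) ∧
    Prv [] (.imp (.eq (.app a []) (.app b [])) .bot) ∧
    ¬ Prv [] (.imp (.eq (.app c []) (.app c [])) .bot) := by
  refine ⟨?_, ?_, ?_⟩
  · intro P hEF hBv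
    constructor
    · intro hP
      exact Prv.allR (Prv.allR (Prv.replCAdm hab hP 0 hEF (by simp)))
    · intro hall
      have h2 := Prv.all_inv (Prv.all_inv hall)
      have h3 := h2.substAdm (Zeta a b 0)
      simp only [List.map_nil] at h3
      rwa [Fm.replC_zeta hab hBv] at h3
  · refine Prv.impR ?_
    refine Prv.eqL (U := (∅ : Set (Nat → Tm))) List.mem_cons_self ⟨?_, ?_⟩ ?_
    · intro σ hσ; exact absurd hσ (Set.notMem_empty σ)
    · intro θ hθ
      exfalso
      unfold Unifies at hθ
      rw [Tm.subst_app, Tm.subst_app, List.map_nil] at hθ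
      simp at hθ
      exact hab hθ
    · intro σ hσ; exact absurd hσ (Set.notMem_empty σ)
  · intro h
    have hs := Prv.sound h Tm.var (by intro D hD; simp at hD)
    exact hs rfl
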